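/- arXiv:1906.00492 — 4 statements merged into one kernel-verified Lean document; each statement's English description precedes it below -/
import Mathlib

section
/- For every dimension d ∈ ℕ (d ≥ 1), every norm ρ on ℝ^d, and every function f : (0,∞) → [0,1] with f(R) → 0 as R → ∞, there exist a set A ⊆ ℝ^d (which may be taken open, hence measurable) and a strictly increasing sequence of positive reals R_n → ∞ such that: (i) ρ(x − y) ≠ R_n for all x, y ∈ A and all n ∈ ℕ, and (ii) μ(A ∩ B^ρ_{R_n}) ≥ f(R_n) · μ(B^ρ_{R_n}) for all n ∈ ℕ. -/
open MeasureTheory Filter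

set_option maxHeartbeats 1000000

open Pointwise Set

namespace SlowDecayAux

variable {d : ℕ} {ρ : EuclideanSpace ℝ (Fin d) → ℝ}

section rho
variable (hρ_smul : ∀ (c : ℝ) (x), ρ (c • x) = |c| * ρ x)
    (hρ_tri : ∀ x y, ρ (x + y) ≤ ρ x + ρ y)

include hρ_smul in
lemma rho_zero : ρ 0 = 0 := by
  have := hρ_smul 0 0
  simpa using this

include hρ_smul in
lemma rho_neg (x) : ρ (-x) = ρ x := by
  have := hρ_smul (-1) x
  simpa using this

include hρ_smul hρ_tri in
lemma rho_nonneg (x) : 0 ≤ ρ x := by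
  have h := hρ_tri x (-x)
  rw [add_neg_cancel, rho_zero hρ_smul, rho_neg hρ_smul] at h
  linarith

include hρ_smul hρ_tri in
lemma rho_sub_le (x y) : ρ (x - y) ≤ ρ x + ρ y := by
  have := hρ_tri x (-y)
  simpa [sub_eq_add_neg, rho_neg hρ_smul] using this

include hρ_tri in
lemma rho_rev (x y) : ρ x ≤ ρ (x - y) + ρ y := by
  have := hρ_tri (x - y) y
  simpa using this

include hρ_smul hρ_tri in
lemma rho_sum_le {ι : Type*} (s : Finset ι) (g : ι → EuclideanSpace ℝ (Fin d)) :
    ρ (∑ i ∈ s, g i) ≤ ∑ i ∈ s, ρ (g i) := by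
  classical
  induction s using Finset.induction_on with
  | empty => simp [rho_zero hρ_smul]
  | insert _ _ hni ih =>
    rename_i a s
    rw [Finset.sum_insert hni, Finset.sum_insert hni]
    exact le_trans (hρ_tri _ _) (by linarith)

lemma euclid_decomp (x : EuclideanSpace ℝ (Fin d)) :
    x = ∑ i, x i • EuclideanSpace.single i (1:ℝ) := by
  apply PiLp.ext
  intro i
  rw [WithLp.ofLp_sum, Finset.sum_apply]
  simp [EuclideanSpace.single_apply]

include hρ_smul hρ_tri in
lemma rho_le_coord_sum (x : EuclideanSpace ℝ (Fin d)) :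
    ρ x ≤ ∑ i, |x i| * ρ (EuclideanSpace.single i (1:ℝ)) := by
  calc ρ x = ρ (∑ i, x i • EuclideanSpace.single i (1:ℝ)) := by
        rw [← euclid_decomp x]
    _ ≤ ∑ i, ρ (x i • EuclideanSpace.single i (1:ℝ)) := rho_sum_le hρ_smul hρ_tri _ _
    _ = ∑ i, |x i| * ρ (EuclideanSpace.single i (1:ℝ)) := by
        simp [hρ_smul]

lemma abs_coord_le_norm (x : EuclideanSpace ℝ (Fin d)) (i : Fin d) : |x i| ≤ ‖x‖ := by
  rw [EuclideanSpace.norm_eq]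
  have h : |x i| = Real.sqrt (x i ^ 2) := by rw [Real.sqrt_sq_eq_abs]
  rw [h]
  apply Real.sqrt_le_sqrt
  calc x i ^ 2 ≤ ∑ j, x j ^ 2 :=
        Finset.single_le_sum (fun j _ => sq_nonneg (x j)) (Finset.mem_univ i)
    _ = ∑ j, ‖x j‖ ^ 2 := by simp [Real.norm_eq_abs, sq_abs]

include hρ_smul hρ_tri in
lemma rho_le_norm (x : EuclideanSpace ℝ (Fin d)) :
    ρ x ≤ (∑ i, ρ (EuclideanSpace.single i (1:ℝ))) * ‖x‖ := by
  refine le_trans (rho_le_coord_sum hρ_smul hρ_tri x) ?_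
  rw [Finset.sum_mul]
  apply Finset.sum_le_sum
  intro i _
  rw [mul_comm (ρ _) ‖x‖]
  exact mul_le_mul_of_nonneg_right (abs_coord_le_norm x i)
    (rho_nonneg hρ_smul hρ_tri _)

include hρ_smul hρ_tri in
lemma rho_continuous : Continuous ρ := by
  set b := ∑ i, ρ (EuclideanSpace.single i (1:ℝ)) with hb
  have hlip : ∀ x y : EuclideanSpace ℝ (Fin d), |ρ x - ρ y| ≤ b * ‖x - y‖ := by
    intro x y
    have h1 : ρ x - ρ y ≤ ρ (x - y) := by
      have := rho_rev hρ_tri x y; linarith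
    have h2 : ρ y - ρ x ≤ ρ (x - y) := by
      have := rho_rev hρ_tri y x
      have hn : ρ (y - x) = ρ (x - y) := by
        rw [← neg_sub x y, rho_neg hρ_smul]
      linarith
    have := rho_le_norm hρ_smul hρ_tri (x - y)
    rw [abs_sub_le_iff]
    constructor <;> linarith
  rw [Metric.continuous_iff]
  intro x ε hε
  have hb0 : 0 ≤ b := Finset.sum_nonneg fun i _ => rho_nonneg hρ_smul hρ_tri _
  refine ⟨ε / (b + 1), by positivity, fun y hy => ?_⟩
  rw [Real.dist_eq]
  calc |ρ y - ρ x| ≤ b * ‖y - x‖ := hlip y x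
    _ ≤ b * dist y x := by rw [dist_eq_norm]
    _ < ε := by
        rcases lt_or_ge 0 (dist y x) with h | h
        · calc b * dist y x ≤ (b+1) * dist y x := by nlinarith
            _ < (b+1) * (ε / (b+1)) := by
                apply mul_lt_mul_of_pos_left hy (by positivity)
            _ = ε := by field_simp
        · have : dist y x = 0 := le_antisymm h dist_nonneg
          rw [this]; simpa using hε

variable (hd : 1 ≤ d) (hρ_pos : ∀ x, x ≠ 0 → 0 < ρ x)

include hρ_smul hρ_tri hd hρ_pos in
lemma rho_lower : ∃ a : ℝ, 0 < a ∧ ∀ x, a * ‖x‖ ≤ ρ x := by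
  have hne : (Metric.sphere (0 : EuclideanSpace ℝ (Fin d)) 1).Nonempty := by
    refine ⟨EuclideanSpace.single ⟨0, hd⟩ (1:ℝ), ?_⟩
    simp [EuclideanSpace.norm_single]
  obtain ⟨x₀, hx₀s, hmin⟩ := (isCompact_sphere (0 : EuclideanSpace ℝ (Fin d)) 1).exists_isMinOn
    hne (rho_continuous hρ_smul hρ_tri).continuousOn
  have hx₀ : ‖x₀‖ = 1 := by simpa using hx₀s
  have hx₀ne : x₀ ≠ 0 := by
    intro h; rw [h] at hx₀; simp at hx₀
  refine ⟨ρ x₀, hρ_pos _ hx₀ne, fun x => ?_⟩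
  rcases eq_or_ne x 0 with rfl | hx
  · simp [rho_zero hρ_smul]
  · have hnx : 0 < ‖x‖ := norm_pos_iff.mpr hx
    have hmem : ‖x‖⁻¹ • x ∈ Metric.sphere (0 : EuclideanSpace ℝ (Fin d)) 1 := by
      simp [norm_smul, abs_of_pos (inv_pos.mpr hnx), inv_mul_cancel₀ hnx.ne']
    have := hmin hmem
    simp only [Set.mem_setOf_eq] at this
    rw [hρ_smul, abs_of_pos (inv_pos.mpr hnx)] at this
    calc ρ x₀ * ‖x‖ ≤ ‖x‖⁻¹ * ρ x * ‖x‖ := by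
          apply mul_le_mul_of_nonneg_right this hnx.le
      _ = ρ x := by field_simp
  
end rho

section vol
variable (hρ_smul : ∀ (c : ℝ) (x), ρ (c • x) = |c| * ρ x)

include hρ_smul in
lemma ball_scaling {R : ℝ} (hR : 0 < R) :
    volume {x : EuclideanSpace ℝ (Fin d) | ρ x < R}
      = ENNReal.ofReal (R ^ d) * volume {x : EuclideanSpace ℝ (Fin d) | ρ x < 1} := by
  have hset : {x : EuclideanSpace ℝ (Fin d) | ρ x < R}
      = R • {x : EuclideanSpace ℝ (Fin d) | ρ x < 1} := by
    ext x
    rw [mem_smul_set_iff_inv_smul_mem₀ hR.ne']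
    simp only [Set.mem_setOf_eq, hρ_smul, abs_of_pos (inv_pos.mpr hR)]
    rw [inv_mul_lt_one₀ hR]
  rw [hset, Measure.addHaar_smul_of_nonneg volume hR.le, finrank_euclideanSpace_fin]

lemma ball_translate (c : EuclideanSpace ℝ (Fin d)) :
    volume {x : EuclideanSpace ℝ (Fin d) | ρ (x - c) < 1}
      = volume {x : EuclideanSpace ℝ (Fin d) | ρ x < 1} := by
  have hset : {x : EuclideanSpace ℝ (Fin d) | ρ (x - c) < 1}
      = (fun x => x + -c) ⁻¹' {x : EuclideanSpace ℝ (Fin d) | ρ x < 1} := by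
    ext x; simp [sub_eq_add_neg]
  rw [hset, measure_preimage_add_right]

end vol

structure SDState (d : ℕ) (ρ : EuclideanSpace ℝ (Fin d) → ℝ) where
  A : Set (EuclideanSpace ℝ (Fin d))
  S : ℝ
  R : ℝ
  Rs : List ℝ
  openA : IsOpen A
  subS : ∀ x ∈ A, ρ x < S
  hS : 1 ≤ S
  hRS : 2 * S ≤ R
  avoid : ∀ x ∈ A, ∀ y ∈ A, ∀ r ∈ Rs, ρ (x - y) ≠ r
  hRsLe : ∀ r ∈ Rs, 2 ≤ r ∧ r ≤ R


theorem step_exists (hd : 1 ≤ d) (hρ_pos : ∀ x, x ≠ 0 → 0 < ρ x)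
    (hρ_smul : ∀ (c : ℝ) (x), ρ (c • x) = |c| * ρ x)
    (hρ_tri : ∀ x y, ρ (x + y) ≤ ρ x + ρ y)
    {f : ℝ → ℝ} (hf_lim : Tendsto f atTop (nhds 0)) (st : SDState d ρ) :
    ∃ t : SDState d ρ, st.A ⊆ t.A ∧ t.Rs = st.R :: st.Rs ∧ st.R + 1 ≤ t.R ∧
      ENNReal.ofReal (f t.R) * volume {x | ρ x < t.R} ≤ volume t.A := by
  classical
  obtain ⟨a, ha, hla⟩ := rho_lower hρ_smul hρ_tri hd hρ_pos
  set b : ℝ := ∑ i, ρ (EuclideanSpace.single i (1:ℝ)) with hbdef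
  have hb0 : 0 ≤ b := Finset.sum_nonneg fun i _ => rho_nonneg hρ_smul hρ_tri _
  have hS1 : 1 ≤ st.S := st.hS
  have hR2 : 2 ≤ st.R := le_trans (by linarith) st.hRS
  set M : ℝ := (st.R + st.S + 3) / a with hMdef
  have hM0 : 0 < M := div_pos (by linarith) ha
  have haM : a * M = st.R + st.S + 3 := by
    rw [hMdef]; field_simp
  set C : ℝ := 4 * b * M + 2 with hCdef
  have hC2 : 2 ≤ C := by nlinarith
  have hC0 : 0 < C := by linarith
  set δ : ℝ := 1 / C ^ d with hδdef
  have hδ : 0 < δ := by positivity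
  obtain ⟨T₀, hT₀⟩ := eventually_atTop.mp (hf_lim.eventually (gt_mem_nhds hδ))
  set T : ℝ := max T₀ 0 with hTdef
  have hT0 : 0 ≤ T := le_max_right _ _
  have hT : ∀ x, T ≤ x → f x < δ := fun x hx => hT₀ x (le_trans (le_max_left _ _) hx)
  set K : ℕ := ⌈max T (2 * st.S + st.R + 3)⌉₊ + 1 with hKdef
  have hK1 : (1:ℝ) ≤ (K:ℝ) := by
    have : 1 ≤ K := Nat.le_add_left 1 _
    exact_mod_cast this
  have hKceil : (⌈max T (2 * st.S + st.R + 3)⌉₊ : ℝ) ≤ (K:ℝ) := by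
    have : (⌈max T (2 * st.S + st.R + 3)⌉₊ : ℕ) ≤ K := Nat.le_succ _
    exact_mod_cast this
  have hKT : T ≤ (K:ℝ) :=
    le_trans (le_trans (le_max_left _ _) (Nat.le_ceil _)) hKceil
  have hKS : 2 * st.S + st.R + 3 ≤ (K:ℝ) :=
    le_trans (le_trans (le_max_right _ _) (Nat.le_ceil _)) hKceil
  -- the centers
  obtain ⟨c, hcoord⟩ : ∃ c : (Fin d → Fin K) → EuclideanSpace ℝ (Fin d),
      ∀ v i, (c v) i = M * ((K:ℝ) + 1 + ((v i : ℕ) : ℝ)) :=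
    ⟨fun v => WithLp.toLp 2 (fun i => M * ((K:ℝ) + 1 + ((v i : ℕ) : ℝ))), fun _ _ => rfl⟩
  have hcsub : ∀ v w i, (c v - c w) i = (c v) i - (c w) i := fun _ _ _ => rfl
  have hcpos : ∀ (v) (i : Fin d), M * ((K:ℝ) + 1) ≤ (c v) i ∧ (c v) i ≤ M * (2 * (K:ℝ)) := by
    intro v i
    have h1 : (0:ℝ) ≤ ((v i : ℕ) : ℝ) := Nat.cast_nonneg _
    have h2 : ((v i : ℕ) : ℝ) + 1 ≤ (K:ℝ) := by
      exact_mod_cast Nat.succ_le_of_lt (v i).isLt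
    rw [hcoord]
    constructor
    · nlinarith
    · nlinarith
  -- lower bound on ρ of centers
  have hc_lb : ∀ v, st.R + st.S + 3 ≤ ρ (c v) := by
    intro v
    set i₀ : Fin d := ⟨0, hd⟩
    have h1 : M * ((K:ℝ) + 1) ≤ (c v) i₀ := (hcpos v i₀).1
    have h2 : |(c v) i₀| ≤ ‖c v‖ := abs_coord_le_norm (c v) i₀
    have h3 : (c v) i₀ ≤ |(c v) i₀| := le_abs_self _
    have h4 : a * ‖c v‖ ≤ ρ (c v) := hla _
    nlinarith
  -- upper bound on ρ of centers
  have hc_ub : ∀ v, ρ (c v) ≤ 2 * M * (K:ℝ) * b := by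
    intro v
    refine le_trans (rho_le_coord_sum hρ_smul hρ_tri (c v)) ?_
    rw [hbdef, Finset.mul_sum]
    apply Finset.sum_le_sum
    intro i _
    have h1 := (hcpos v i).1
    have h2 := (hcpos v i).2
    have habs : |(c v) i| ≤ 2 * M * (K:ℝ) := by
      rw [abs_of_nonneg (by nlinarith)]
      linarith
    exact mul_le_mul_of_nonneg_right habs (rho_nonneg hρ_smul hρ_tri _) |>.trans
      (le_of_eq rfl)
  -- separation of centers
  have hsep : ∀ v w, v ≠ w → st.R + st.S + 3 ≤ ρ (c v - c w) := by
    intro v w hvw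
    obtain ⟨i, hi⟩ := Function.ne_iff.mp hvw
    have hne : ((v i : ℕ) : ℝ) ≠ ((w i : ℕ) : ℝ) := by
      intro h
      exact hi (Fin.val_injective (by exact_mod_cast h))
    have h1 : (1:ℝ) ≤ |((v i : ℕ) : ℝ) - ((w i : ℕ) : ℝ)| := by
      have hz : ((v i : ℕ) : ℤ) ≠ ((w i : ℕ) : ℤ) := by
        intro h; apply hne; exact_mod_cast h
      have h := Int.one_le_abs (sub_ne_zero.mpr hz)
      calc (1:ℝ) = ((1:ℤ):ℝ) := by norm_num
        _ ≤ ((|((v i : ℕ) : ℤ) - ((w i : ℕ) : ℤ)| : ℤ) : ℝ) := by exact_mod_cast h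
        _ = |((v i : ℕ) : ℝ) - ((w i : ℕ) : ℝ)| := by push_cast; ring_nf
    have hcoordeq : (c v - c w) i = M * (((v i : ℕ) : ℝ) - ((w i : ℕ) : ℝ)) := by
      rw [hcsub, hcoord, hcoord]; ring
    have h2 : M ≤ |(c v - c w) i| := by
      rw [hcoordeq, abs_mul, abs_of_pos hM0]
      nlinarith
    have h3 : |(c v - c w) i| ≤ ‖c v - c w‖ := abs_coord_le_norm _ i
    have h4 : a * ‖c v - c w‖ ≤ ρ (c v - c w) := hla _
    nlinarith
  -- the balls
  set Bl : (Fin d → Fin K) → Set (EuclideanSpace ℝ (Fin d)) :=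
    fun v => {x | ρ (x - c v) < 1} with hBldef
  have hBl_open : ∀ v, IsOpen (Bl v) := by
    intro v
    have : Continuous fun x : EuclideanSpace ℝ (Fin d) => ρ (x - c v) :=
      (rho_continuous hρ_smul hρ_tri).comp (continuous_id.sub continuous_const)
    exact isOpen_lt this continuous_const
  set chunk : Set (EuclideanSpace ℝ (Fin d)) :=
    ⋃ v ∈ (Finset.univ : Finset (Fin d → Fin K)), Bl v with hchunkdef
  have hchunk_mem : ∀ x, x ∈ chunk ↔ ∃ v, x ∈ Bl v := by
    intro x; simp [hchunkdef]
  set S' : ℝ := st.S + 2 * M * (K:ℝ) * b + 1 with hS'def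
  set R' : ℝ := 2 * S' + T + st.R + 1 with hR'def
  have hMKb : 0 ≤ 2 * M * (K:ℝ) * b := by positivity
  have hS'1 : 1 ≤ S' := by rw [hS'def]; linarith
  have hRR' : st.R + 1 ≤ R' := by rw [hR'def]; linarith
  have hR'pos : 0 < R' := by linarith
  set A' : Set (EuclideanSpace ℝ (Fin d)) := st.A ∪ chunk with hA'def
  -- distance estimates
  have hd_same : ∀ v, ∀ x ∈ Bl v, ∀ y ∈ Bl v, ρ (x - y) < 2 := by
    intro v x hx y hy
    have h1 : ρ (x - y) ≤ ρ (x - c v) + ρ (y - c v) := by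
      have := rho_sub_le hρ_smul hρ_tri (x - c v) (y - c v)
      simpa [sub_sub_sub_cancel_right] using this
    have hx' : ρ (x - c v) < 1 := hx
    have hy' : ρ (y - c v) < 1 := hy
    linarith
  have hd_diff : ∀ v w, v ≠ w → ∀ x ∈ Bl v, ∀ y ∈ Bl w, st.R < ρ (x - y) := by
    intro v w hvw x hx y hy
    have h0 := hsep v w hvw
    have h1 : ρ (c v - c w) ≤ ρ ((c v - c w) - (x - y)) + ρ (x - y) :=
      rho_rev hρ_tri _ _
    have heq : (c v - c w) - (x - y) = (c v - x) - (c w - y) := by abel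
    have h2 : ρ ((c v - x) - (c w - y)) ≤ ρ (c v - x) + ρ (c w - y) :=
      rho_sub_le hρ_smul hρ_tri _ _
    have h3 : ρ (c v - x) = ρ (x - c v) := by
      rw [← neg_sub x (c v), rho_neg hρ_smul]
    have h4 : ρ (c w - y) = ρ (y - c w) := by
      rw [← neg_sub y (c w), rho_neg hρ_smul]
    have hx' : ρ (x - c v) < 1 := hx
    have hy' : ρ (y - c w) < 1 := hy
    rw [heq] at h1
    linarith
  have hd_cross : ∀ v, ∀ x ∈ Bl v, ∀ y ∈ st.A, st.R < ρ (x - y) := by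
    intro v x hx y hy
    have h0 := hc_lb v
    have h1 : ρ (c v) ≤ ρ (c v - (x - y)) + ρ (x - y) := rho_rev hρ_tri _ _
    have heq : c v - (x - y) = (c v - x) + y := by abel
    have h2 : ρ ((c v - x) + y) ≤ ρ (c v - x) + ρ y := hρ_tri _ _
    have h3 : ρ (c v - x) = ρ (x - c v) := by
      rw [← neg_sub x (c v), rho_neg hρ_smul]
    have hx' : ρ (x - c v) < 1 := hx
    have hy' : ρ y < st.S := st.subS y hy
    rw [heq] at h1
    linarith
  -- the new state's invariants
  have openA' : IsOpen A' :=
    st.openA.union (isOpen_biUnion fun v _ => hBl_open v)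
  have subS' : ∀ x ∈ A', ρ x < S' := by
    intro x hx
    rcases hx with hx | hx
    · exact lt_of_lt_of_le (st.subS x hx) (by rw [hS'def]; linarith)
    · obtain ⟨v, hv⟩ := (hchunk_mem x).mp hx
      have h1 : ρ x ≤ ρ (x - c v) + ρ (c v) := rho_rev hρ_tri _ _
      have h2 : ρ (x - c v) < 1 := hv
      have h3 := hc_ub v
      rw [hS'def]
      linarith
  have hRS' : 2 * S' ≤ R' := by rw [hR'def]; linarith
  have avoid' : ∀ x ∈ A', ∀ y ∈ A', ∀ r ∈ st.R :: st.Rs, ρ (x - y) ≠ r := by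
    intro x hx y hy r hr
    have hr2 : 2 ≤ r := by
      rcases List.mem_cons.mp hr with rfl | hr'
      · exact hR2
      · exact (st.hRsLe r hr').1
    have hrR : r ≤ st.R := by
      rcases List.mem_cons.mp hr with rfl | hr'
      · exact le_refl _
      · exact (st.hRsLe r hr').2
    rcases hx with hx | hx <;> rcases hy with hy | hy
    · -- both old
      rcases List.mem_cons.mp hr with rfl | hr'
      · have h1 : ρ (x - y) ≤ ρ x + ρ y := rho_sub_le hρ_smul hρ_tri x y
        have h2 : ρ x < st.S := st.subS x hx
        have h3 : ρ y < st.S := st.subS y hy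
        have := st.hRS
        exact ne_of_lt (by linarith)
      · exact st.avoid x hx y hy r hr'
    · -- x old, y new
      obtain ⟨v, hv⟩ := (hchunk_mem y).mp hy
      have h1 : st.R < ρ (y - x) := hd_cross v y hv x hx
      have h2 : ρ (x - y) = ρ (y - x) := by
        rw [← neg_sub y x, rho_neg hρ_smul]
      exact ne_of_gt (by linarith)
    · -- x new, y old
      obtain ⟨v, hv⟩ := (hchunk_mem x).mp hx
      exact ne_of_gt (lt_of_le_of_lt hrR (hd_cross v x hv y hy))
    · -- both new
      obtain ⟨v, hv⟩ := (hchunk_mem x).mp hx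
      obtain ⟨w, hw⟩ := (hchunk_mem y).mp hy
      rcases eq_or_ne v w with rfl | hvw
      · exact ne_of_lt (lt_of_lt_of_le (hd_same v x hv y hw) hr2)
      · exact ne_of_gt (lt_of_le_of_lt hrR (hd_diff v w hvw x hv y hw))
  have hRsLe' : ∀ r ∈ st.R :: st.Rs, 2 ≤ r ∧ r ≤ R' := by
    intro r hr
    rcases List.mem_cons.mp hr with rfl | hr'
    · exact ⟨hR2, by linarith⟩
    · exact ⟨(st.hRsLe r hr').1, le_trans (st.hRsLe r hr').2 (by linarith)⟩
  refine ⟨⟨A', S', R', st.R :: st.Rs, openA', subS', hS'1, hRS', avoid', hRsLe'⟩,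
    Set.subset_union_left, rfl, hRR', ?_⟩
  -- the measure estimate
  show ENNReal.ofReal (f R') * volume {x | ρ x < R'} ≤ volume A'
  set ω : ENNReal := volume {x : EuclideanSpace ℝ (Fin d) | ρ x < 1} with hωdef
  have hvolball : volume {x : EuclideanSpace ℝ (Fin d) | ρ x < R'}
      = ENNReal.ofReal (R' ^ d) * ω := ball_scaling hρ_smul hR'pos
  have hblv : ∀ v, volume (Bl v) = ω := fun v => ball_translate (c v)
  have hdisj : (↑(Finset.univ : Finset (Fin d → Fin K)) : Set (Fin d → Fin K)).PairwiseDisjoint Bl := by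
    intro v _ w _ hvw
    rw [Function.onFun, Set.disjoint_left]
    intro x hxv hxw
    have h0 := hsep v w hvw
    have h1 : ρ (c v - c w) ≤ ρ (c v - x) + ρ (c w - x) := by
      have := rho_sub_le hρ_smul hρ_tri (c v - x) (c w - x)
      simpa [sub_sub_sub_cancel_right] using this
    have h3 : ρ (c v - x) = ρ (x - c v) := by
      rw [← neg_sub x (c v), rho_neg hρ_smul]
    have h4 : ρ (c w - x) = ρ (x - c w) := by
      rw [← neg_sub x (c w), rho_neg hρ_smul]
    have hx' : ρ (x - c v) < 1 := hxv
    have hy' : ρ (x - c w) < 1 := hxw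
    linarith
  have hvolchunk : volume chunk = ((K:ENNReal) ^ d) * ω := by
    rw [hchunkdef, measure_biUnion_finset hdisj (fun v _ => (hBl_open v).measurableSet)]
    simp only [hblv]
    rw [Finset.sum_const, Finset.card_univ, Fintype.card_fun, Fintype.card_fin,
      Fintype.card_fin, nsmul_eq_mul]
    push_cast
    ring
  have hfR' : f R' < δ := hT R' (by rw [hR'def]; linarith)
  have hR'le : R' ≤ C * (K:ℝ) := by
    rw [hR'def, hS'def, hCdef]
    nlinarith
  have hkey : δ * R' ^ d ≤ (K:ℝ) ^ d := by
    calc δ * R' ^ d ≤ δ * (C * (K:ℝ)) ^ d := by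
          apply mul_le_mul_of_nonneg_left (pow_le_pow_left₀ hR'pos.le hR'le d) hδ.le
      _ = (K:ℝ) ^ d := by
          rw [mul_pow, hδdef]
          field_simp
  calc ENNReal.ofReal (f R') * volume {x | ρ x < R'}
      = ENNReal.ofReal (f R') * ENNReal.ofReal (R' ^ d) * ω := by
        rw [hvolball, mul_assoc]
    _ ≤ ENNReal.ofReal δ * ENNReal.ofReal (R' ^ d) * ω := by
        apply mul_le_mul_left
        apply mul_le_mul_left
        exact ENNReal.ofReal_le_ofReal hfR'.le
    _ = ENNReal.ofReal (δ * R' ^ d) * ω := by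
        rw [ENNReal.ofReal_mul hδ.le]
    _ ≤ ENNReal.ofReal ((K:ℝ) ^ d) * ω := by
        apply mul_le_mul_left
        exact ENNReal.ofReal_le_ofReal hkey
    _ = ((K:ENNReal) ^ d) * ω := by
        rw [ENNReal.ofReal_pow (Nat.cast_nonneg K), ENNReal.ofReal_natCast]
    _ = volume chunk := hvolchunk.symm
    _ ≤ volume A' := measure_mono Set.subset_union_right

end SlowDecayAux


open SlowDecayAux

/-- For every dimension `d ≥ 1`, every norm `ρ` on `ℝ^d`, and every
function `f : (0,∞) → [0,1]` with `f(R) → 0` as `R → ∞`, there exist an open set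
`A ⊆ ℝ^d` and a strictly increasing sequence of positive reals `R n → ∞` such that
`ρ (x - y) ≠ R n` for all `x, y ∈ A` and all `n`, and
`μ(A ∩ B^ρ_{R n}) ≥ f (R n) · μ(B^ρ_{R n})` for all `n`. -/
theorem slow_decay_avoiding_distances (d : ℕ) (hd : 1 ≤ d)
    (ρ : EuclideanSpace ℝ (Fin d) → ℝ)
    (hρ_pos : ∀ x, x ≠ 0 → 0 < ρ x)
    (hρ_smul : ∀ (c : ℝ) (x), ρ (c • x) = |c| * ρ x)
    (hρ_tri : ∀ x y, ρ (x + y) ≤ ρ x + ρ y)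
    (f : ℝ → ℝ)
    (hf_range : ∀ R : ℝ, 0 < R → 0 ≤ f R ∧ f R ≤ 1)
    (hf_lim : Tendsto f atTop (nhds 0)) :
    ∃ (A : Set (EuclideanSpace ℝ (Fin d))) (R : ℕ → ℝ),
      IsOpen A ∧
      StrictMono R ∧
      (∀ n, 0 < R n) ∧
      Tendsto R atTop atTop ∧
      (∀ n, ∀ x ∈ A, ∀ y ∈ A, ρ (x - y) ≠ R n) ∧
      (∀ n, ENNReal.ofReal (f (R n)) * volume {x | ρ x < R n} ≤
        volume (A ∩ {x | ρ x < R n})) := by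
  classical
  set step : SDState d ρ → SDState d ρ :=
    fun s => (step_exists hd hρ_pos hρ_smul hρ_tri hf_lim s).choose with hstepdef
  have hspec : ∀ s : SDState d ρ,
      s.A ⊆ (step s).A ∧ (step s).Rs = s.R :: s.Rs ∧ s.R + 1 ≤ (step s).R ∧
      ENNReal.ofReal (f (step s).R) * volume {x | ρ x < (step s).R} ≤ volume (step s).A :=
    fun s => (step_exists hd hρ_pos hρ_smul hρ_tri hf_lim s).choose_spec
  set pre : SDState d ρ :=
    ⟨∅, 1, 2, [], isOpen_empty, by simp, le_refl 1, by norm_num, by simp, by simp⟩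
    with hpredef
  set st : ℕ → SDState d ρ := fun n => step^[n] (step pre) with hstdef
  have hsucc : ∀ n, st (n+1) = step (st n) := by
    intro n
    rw [hstdef]
    simp [Function.iterate_succ_apply']
  have hmono : ∀ n, (st n).A ⊆ (st (n+1)).A := fun n => by
    rw [hsucc]; exact (hspec (st n)).1
  have hRs_succ : ∀ n, (st (n+1)).Rs = (st n).R :: (st n).Rs := fun n => by
    rw [hsucc]; exact (hspec (st n)).2.1
  have hRsucc : ∀ n, (st n).R + 1 ≤ (st (n+1)).R := fun n => by
    conv_rhs => rw [hsucc]
    exact (hspec (st n)).2.2.1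
  have hmeasure : ∀ n, ENNReal.ofReal (f ((st n).R)) * volume {x | ρ x < (st n).R}
      ≤ volume (st n).A := by
    intro n
    cases n with
    | zero => exact (hspec pre).2.2.2
    | succ n =>
      have h := (hspec (st n)).2.2.2
      rw [← hsucc] at h
      exact h
  set R : ℕ → ℝ := fun n => (st n).R with hRdef
  set A : Set (EuclideanSpace ℝ (Fin d)) := ⋃ n, (st n).A with hAdef
  have hAmono : Monotone fun n => (st n).A := monotone_nat_of_le_succ hmono
  have hR2 : ∀ n, 2 ≤ R n := by
    intro n
    have h1 := (st n).hS
    have h2 := (st n).hRS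
    rw [hRdef]
    dsimp only
    linarith
  have hRstrict : StrictMono R := strictMono_nat_of_lt_succ fun n => by
    have := hRsucc n
    rw [hRdef]
    dsimp only
    linarith
  have hRpos : ∀ n, 0 < R n := fun n => by linarith [hR2 n]
  have hRge : ∀ n : ℕ, (n:ℝ) ≤ R n := by
    intro n
    induction n with
    | zero => simp only [Nat.cast_zero]; linarith [hR2 0]
    | succ n ih =>
      have := hRsucc n
      push_cast
      rw [hRdef]
      dsimp only
      rw [hRdef] at ih
      dsimp only at ih
      linarith
  have hRtendsto : Tendsto R atTop atTop :=
    tendsto_atTop_mono hRge tendsto_natCast_atTop_atTop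
  have hmem : ∀ n k, R n ∈ (st (n + 1 + k)).Rs := by
    intro n k
    induction k with
    | zero => rw [hRs_succ n]; exact List.mem_cons_self
    | succ k ih =>
      rw [show n + 1 + (k+1) = (n + 1 + k) + 1 by omega, hRs_succ]
      exact List.mem_cons_of_mem _ ih
  have hmemlt : ∀ n m, n < m → R n ∈ (st m).Rs := by
    intro n m h
    obtain ⟨k, rfl⟩ : ∃ k, m = n + 1 + k := ⟨m - (n+1), by omega⟩
    exact hmem n k
  have subball : ∀ n, (st n).A ⊆ {x | ρ x < R n} := by
    intro n x hx
    have h1 := (st n).subS x hx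
    have h2 := (st n).hS
    have h3 := (st n).hRS
    show ρ x < R n
    rw [hRdef]
    dsimp only
    linarith
  refine ⟨A, R, isOpen_iUnion fun n => (st n).openA, hRstrict, hRpos, hRtendsto, ?_, ?_⟩
  · intro n x hx y hy
    obtain ⟨j, hxj⟩ := Set.mem_iUnion.mp hx
    obtain ⟨k, hyk⟩ := Set.mem_iUnion.mp hy
    have hxm : x ∈ (st (max (max j k) n)).A :=
      hAmono (le_trans (le_max_left j k) (le_max_left _ n)) hxj
    have hym : y ∈ (st (max (max j k) n)).A :=
      hAmono (le_trans (le_max_right j k) (le_max_left _ n)) hyk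
    rcases eq_or_lt_of_le (le_max_right (max j k) n) with heq | hlt
    · have h1 : ρ (x - y) ≤ ρ x + ρ y := rho_sub_le hρ_smul hρ_tri x y
      have h2 := (st (max (max j k) n)).subS x hxm
      have h3 := (st (max (max j k) n)).subS y hym
      have h4 := (st (max (max j k) n)).hRS
      have hlt2 : ρ (x - y) < R (max (max j k) n) := by
        rw [hRdef]; dsimp only; linarith
      rw [← heq] at hlt2
      exact ne_of_lt hlt2
    · exact (st (max (max j k) n)).avoid x hxm y hym (R n) (hmemlt n _ hlt)
  · intro n
    calc ENNReal.ofReal (f (R n)) * volume {x | ρ x < R n}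
        ≤ volume (st n).A := hmeasure n
      _ = volume ((st n).A ∩ {x | ρ x < R n}) := by
          rw [Set.inter_eq_left.mpr (subball n)]
      _ ≤ volume (A ∩ {x | ρ x < R n}) :=
          measure_mono (Set.inter_subset_inter_left _
            (Set.subset_iUnion (fun n => (st n).A) n))
end

section
/- For every dimension d ∈ ℕ (d ≥ 1) and every function f : (0,∞) → [0,1] with f(R) → 0 as R → ∞, there exist a set A ⊆ ℝ^d (which may be taken open, hence measurable) and a strictly increasing sequence of positive reals R_n → ∞ such that ‖x − y‖ ≠ R_n for all x, y ∈ A and all n ∈ ℕ (where ‖·‖ is the Euclidean norm), and μ(A ∩ B_{R_n}) ≥ f(R_n) · μ(B_{R_n}) for all n ∈ ℕ. -/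
open MeasureTheory Filter

namespace SlowDecayAux

open Set

variable (d : ℕ) (R0 : ℝ) (K : ℕ → ℕ)

noncomputable def Rs : ℕ → ℝ
  | 0 => R0
  | n+1 => 6 * d * K n * Rs n

noncomputable def ss : ℕ → ℝ
  | 0 => R0 / (2 * d)
  | n+1 => 2 * K n * Rs d R0 K n

def Es (n : ℕ) : Set ℝ :=
  ⋃ m : ℤ, Ioo (2 * Rs d R0 K n * m) (2 * Rs d R0 K n * m + ss d R0 K n)

def Ss (n : ℕ) : Set ℝ :=
  (⋂ i ∈ Finset.range n, Es d R0 K i) ∩ Ioo 0 (ss d R0 K n)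

variable {d R0 K}
variable (hd : 1 ≤ d) (hR0 : 0 < R0) (hK : ∀ n, 1 ≤ K n)


lemma image_add_eq_preimage (c : ℝ) (s : Set ℝ) :
    (fun y => y + c) '' s = (fun y => y + (-c)) ⁻¹' s := by
  ext z
  constructor
  · rintro ⟨y, hy, rfl⟩
    simpa [mem_preimage] using hy
  · intro h
    exact ⟨z + -c, h, by ring⟩

section
include hd hR0 hK

lemma Rpos : ∀ n, 0 < Rs d R0 K n := by
  intro n
  induction n with
  | zero => exact hR0
  | succ n ih =>
    have hd' : (1:ℝ) ≤ d := by exact_mod_cast hd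
    have hk' : (1:ℝ) ≤ K n := by exact_mod_cast hK n
    show 0 < 6 * d * K n * Rs d R0 K n
    positivity

lemma Rs_lt_succ : ∀ n, Rs d R0 K n < Rs d R0 K (n+1) := by
  intro n
  have hd' : (1:ℝ) ≤ d := by exact_mod_cast hd
  have hk' : (1:ℝ) ≤ K n := by exact_mod_cast hK n
  have hR := Rpos hd hR0 hK n
  have h1 : (1:ℝ) ≤ d * K n := by nlinarith
  have h2 := mul_le_mul_of_nonneg_right h1 hR.le
  rw [one_mul] at h2
  show Rs d R0 K n < 6 * d * K n * Rs d R0 K n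
  nlinarith

lemma two_Rs_le_succ : ∀ n, 2 * Rs d R0 K n ≤ Rs d R0 K (n+1) := by
  intro n
  have hd' : (1:ℝ) ≤ d := by exact_mod_cast hd
  have hk' : (1:ℝ) ≤ K n := by exact_mod_cast hK n
  have hR := Rpos hd hR0 hK n
  have h1 : (1:ℝ) ≤ d * K n := by nlinarith
  have h2 := mul_le_mul_of_nonneg_right h1 hR.le
  rw [one_mul] at h2
  show 2 * Rs d R0 K n ≤ 6 * d * K n * Rs d R0 K n
  nlinarith

lemma spos : ∀ n, 0 < ss d R0 K n := by
  intro n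
  have hd' : (1:ℝ) ≤ d := by exact_mod_cast hd
  cases n with
  | zero =>
    show 0 < R0 / (2 * d); positivity
  | succ n =>
    have hk' : (1:ℝ) ≤ K n := by exact_mod_cast hK n
    have hR := Rpos hd hR0 hK n
    show 0 < 2 * K n * Rs d R0 K n
    nlinarith

lemma sd_le : ∀ n, ss d R0 K n * d ≤ Rs d R0 K n / 2 := by
  intro n
  have hd' : (1:ℝ) ≤ d := by exact_mod_cast hd
  cases n with
  | zero =>
    show R0 / (2 * d) * d ≤ R0 / 2
    have hdne : (d:ℝ) ≠ 0 := by positivity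
    have : R0 / (2 * d) * d = R0 / 2 := by field_simp
    rw [this]
  | succ n =>
    have hk' : (1:ℝ) ≤ K n := by exact_mod_cast hK n
    have hR := Rpos hd hR0 hK n
    have h3 : 0 ≤ (d:ℝ) * K n * Rs d R0 K n := by positivity
    show 2 * K n * Rs d R0 K n * d ≤ 6 * d * K n * Rs d R0 K n / 2
    nlinarith

lemma s_le_half : ∀ n, ss d R0 K n ≤ Rs d R0 K n / 2 := by
  intro n
  have hd' : (1:ℝ) ≤ d := by exact_mod_cast hd
  have h := sd_le hd hR0 hK n
  have hs := spos hd hR0 hK n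
  nlinarith

lemma smono : Monotone (ss d R0 K) := by
  apply monotone_nat_of_le_succ
  intro n
  have hd' : (1:ℝ) ≤ d := by exact_mod_cast hd
  have hk' : (1:ℝ) ≤ K n := by exact_mod_cast hK n
  have hR := Rpos hd hR0 hK n
  have hs := s_le_half hd hR0 hK n
  show ss d R0 K n ≤ 2 * K n * Rs d R0 K n
  nlinarith

lemma Rs_dvd : ∀ i n, i ≤ n → ∃ p : ℕ, 1 ≤ p ∧ Rs d R0 K n = p * Rs d R0 K i := by
  intro i n hin
  induction n, hin using Nat.le_induction with
  | base => exact ⟨1, le_refl 1, by norm_num⟩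
  | succ n hin ih =>
    obtain ⟨p, hp1, hp⟩ := ih
    refine ⟨6 * d * K n * p, ?_, ?_⟩
    · have := hK n
      have : 1 ≤ 6 * d * K n := by nlinarith [hd, hK n]
      calc 1 ≤ 1 * p := by omega
        _ ≤ 6 * d * K n * p := Nat.mul_le_mul_right p this
    · show 6 * (d:ℝ) * K n * Rs d R0 K n = (6 * d * K n * p : ℕ) * Rs d R0 K i
      push_cast
      rw [hp]; ring

lemma mem_Es_add (i : ℕ) (j : ℤ) (x : ℝ) :
    x + 2 * Rs d R0 K i * j ∈ Es d R0 K i ↔ x ∈ Es d R0 K i := by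
  simp only [Es, mem_iUnion, mem_Ioo]
  constructor
  · rintro ⟨m, h1, h2⟩
    refine ⟨m - j, ?_, ?_⟩ <;> push_cast <;> push_cast at h1 h2 <;> linarith
  · rintro ⟨m, h1, h2⟩
    refine ⟨m + j, ?_, ?_⟩ <;> push_cast <;> push_cast at h1 h2 <;> linarith

lemma mem_Es_add_of_le {i n : ℕ} (hin : i ≤ n) (k : ℤ) (x : ℝ) :
    x + 2 * Rs d R0 K n * k ∈ Es d R0 K i ↔ x ∈ Es d R0 K i := by
  obtain ⟨p, hp1, hp⟩ := Rs_dvd hd hR0 hK i n hin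
  have heq : x + 2 * Rs d R0 K n * k = x + 2 * Rs d R0 K i * ((p * k : ℤ) : ℝ) := by
    rw [hp]; push_cast; ring
  rw [heq, mem_Es_add hd hR0 hK]

lemma Es_measurable (i : ℕ) : MeasurableSet (Es d R0 K i) :=
  MeasurableSet.iUnion fun _ => measurableSet_Ioo

lemma Ss_measurable (n : ℕ) : MeasurableSet (Ss d R0 K n) :=
  (MeasurableSet.biInter (Finset.range n).countable_toSet
    fun i _ => Es_measurable hd hR0 hK i).inter measurableSet_Ioo

lemma Es_open (i : ℕ) : IsOpen (Es d R0 K i) :=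
  isOpen_iUnion fun _ => isOpen_Ioo

lemma Ss_open (n : ℕ) : IsOpen (Ss d R0 K n) := by
  apply IsOpen.inter _ isOpen_Ioo
  exact isOpen_biInter_finset fun i _ => Es_open hd hR0 hK i

lemma Ss_succ (n : ℕ) :
    Ss d R0 K (n+1) =
      ⋃ k ∈ Finset.range (K n), (fun y => y + 2 * Rs d R0 K n * (k:ℝ)) '' Ss d R0 K n := by
  have hR := Rpos hd hR0 hK n
  have hs := spos hd hR0 hK n
  have hsT : ss d R0 K n ≤ 2 * Rs d R0 K n := by
    have := s_le_half hd hR0 hK n; linarith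
  have hssucc : ss d R0 K (n+1) = 2 * K n * Rs d R0 K n := rfl
  ext x
  simp only [Ss, Set.mem_inter_iff, Set.mem_iInter, Set.mem_Ioo, Finset.mem_range,
    Set.mem_iUnion, Set.mem_image, exists_prop]
  constructor
  · rintro ⟨hE, hx0, hxs⟩
    have hEn : x ∈ Es d R0 K n := hE n (Nat.lt_succ_self n)
    rw [Es, mem_iUnion] at hEn
    obtain ⟨m, hm1, hm2⟩ := hEn
    rw [hssucc] at hxs
    have hKn : (1:ℝ) ≤ K n := by exact_mod_cast hK n
    have hm0 : 0 ≤ m := by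
      by_contra h
      push_neg at h
      have hm1' : m ≤ -1 := by omega
      have : (m:ℝ) ≤ -1 := by exact_mod_cast hm1'
      nlinarith
    have hmK : m < (K n : ℤ) := by
      by_contra h
      push_neg at h
      have : ((K n : ℤ) : ℝ) ≤ (m:ℝ) := by exact_mod_cast h
      push_cast at this
      nlinarith
    refine ⟨m.toNat, ?_, x - 2 * Rs d R0 K n * m, ⟨⟨?_, ?_, ?_⟩, ?_⟩⟩
    · omega
    · intro i hi
      have := (mem_Es_add_of_le hd hR0 hK (le_of_lt hi) m (x - 2 * Rs d R0 K n * m))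
      rw [show x - 2 * Rs d R0 K n * ↑m + 2 * Rs d R0 K n * ↑m = x by ring] at this
      exact this.mp (hE i (by omega))
    · linarith
    · linarith
    · have : ((m.toNat : ℕ) : ℝ) = (m : ℝ) := by
        rw [show ((m.toNat : ℕ) : ℝ) = ((m.toNat : ℤ) : ℝ) by push_cast; ring, Int.toNat_of_nonneg hm0]
      rw [this]; ring
  · rintro ⟨k, hk, y, ⟨hyE, hy0, hys⟩, rfl⟩
    have hKn : (k:ℝ) + 1 ≤ K n := by exact_mod_cast Nat.succ_le_of_lt hk
    have hknn : (0:ℝ) ≤ k := by positivity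
    refine ⟨?_, by nlinarith, ?_⟩
    · intro i hi
      rcases Nat.lt_succ_iff_lt_or_eq.mp hi with hi' | rfl
      · have h := (mem_Es_add_of_le hd hR0 hK (le_of_lt hi') (k:ℤ) y).mpr (hyE i hi')
        simpa using h
      · rw [Es, mem_iUnion]
        exact ⟨(k:ℤ), by push_cast; constructor <;> linarith⟩
    · rw [hssucc]; nlinarith

lemma Ss_vol : ∀ n, volume (Ss d R0 K n) =
    ENNReal.ofReal (ss d R0 K 0 * ∏ i ∈ Finset.range n, (K i : ℝ)) := by
  intro n
  induction n with
  | zero => simp [Ss, Real.volume_Ioo]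
  | succ n ih =>
    have hR := Rpos hd hR0 hK n
    have hs := spos hd hR0 hK n
    have hsT : ss d R0 K n ≤ 2 * Rs d R0 K n := by
      have := s_le_half hd hR0 hK n; linarith
    have hsub : ∀ k : ℕ, (fun y => y + 2 * Rs d R0 K n * (k:ℝ)) '' Ss d R0 K n ⊆
        Ioo (2 * Rs d R0 K n * (k:ℝ)) (2 * Rs d R0 K n * (k:ℝ) + ss d R0 K n) := by
      rintro k x ⟨y, ⟨_, hy0, hys⟩, rfl⟩
      exact ⟨by dsimp only; linarith, by dsimp only; linarith⟩
    rw [Ss_succ hd hR0 hK n]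
    rw [measure_biUnion_finset ?_ ?_]
    · have himg : ∀ k ∈ Finset.range (K n),
          volume ((fun y => y + 2 * Rs d R0 K n * (k:ℝ)) '' Ss d R0 K n) = volume (Ss d R0 K n) := by
        intro k _
        rw [image_add_eq_preimage, measure_preimage_add_right]
      rw [Finset.sum_congr rfl himg, Finset.sum_const, Finset.card_range, ih, nsmul_eq_mul,
        ← ENNReal.ofReal_natCast (K n), ← ENNReal.ofReal_mul (by positivity)]
      congr 1
      rw [Finset.prod_range_succ]; ring
    · intro a ha b hb hab
      simp only [Finset.coe_range, Set.mem_Iio] at ha hb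
      refine Set.disjoint_left.mpr fun x hxa hxb => ?_
      have h1 := hsub a hxa
      have h2 := hsub b hxb
      simp only [mem_Ioo] at h1 h2
      have hne : (a:ℝ) ≠ (b:ℝ) := by exact_mod_cast hab
      rcases lt_or_gt_of_ne hab with h | h
      · have : (a:ℝ) + 1 ≤ b := by exact_mod_cast Nat.succ_le_of_lt h
        nlinarith [h1.1, h1.2, h2.1, h2.2]
      · have : (b:ℝ) + 1 ≤ a := by exact_mod_cast Nat.succ_le_of_lt h
        nlinarith [h1.1, h1.2, h2.1, h2.2]
    · intro k _
      rw [image_add_eq_preimage]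
      exact (Ss_measurable hd hR0 hK n).preimage (measurable_id.add_const _)

lemma Rs_succ (n : ℕ) : Rs d R0 K (n+1) = 6 * d * K n * Rs d R0 K n := rfl

lemma Ioo_subset_Es (n : ℕ) : Ioo 0 (ss d R0 K n) ⊆ Es d R0 K n := by
  intro x hx
  rw [Es, mem_iUnion]
  exact ⟨0, by simpa using hx⟩

lemma Ss_subset_Es (m n : ℕ) : Ss d R0 K m ⊆ Es d R0 K n := by
  rcases lt_or_ge n m with h | h
  · intro x hx
    have h1 := hx.1
    simp only [Set.mem_iInter] at h1
    exact h1 n (Finset.mem_range.mpr h)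
  · intro x hx
    have hx' : x ∈ Ioo 0 (ss d R0 K m) := hx.2
    have : x ∈ Ioo 0 (ss d R0 K n) := ⟨hx'.1, lt_of_lt_of_le hx'.2 (smono hd hR0 hK h)⟩
    exact Ioo_subset_Es hd hR0 hK n this

lemma ell_eq : ∀ n, ss d R0 K 0 * ∏ i ∈ Finset.range n, (K i : ℝ) =
    1 / (4 * d) * (1 / (6 * d)) ^ n * (2 * Rs d R0 K n) := by
  have hdne : (d:ℝ) ≠ 0 := by
    have : (1:ℝ) ≤ d := by exact_mod_cast hd
    linarith
  intro n
  induction n with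
  | zero =>
    show R0 / (2 * d) * 1 = _
    rw [show Rs d R0 K 0 = R0 from rfl]
    field_simp
    ring
  | succ n ih =>
    rw [Finset.prod_range_succ, ← mul_assoc, ih, Rs_succ hd hR0 hK, pow_succ]
    field_simp

end

end SlowDecayAux

open SlowDecayAux Set in
/-- For every dimension `d ≥ 1` and every function `f : (0,∞) → [0,1]`
with `f(R) → 0` as `R → ∞`, there exist an open set `A ⊆ ℝ^d` and a strictly increasing
sequence of positive reals `R n → ∞` such that `‖x - y‖ ≠ R n` for all `x, y ∈ A` and
all `n` (Euclidean norm), and `μ(A ∩ B_{R n}) ≥ f (R n) · μ(B_{R n})` for all `n`. -/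
theorem slow_decay_avoiding_euclidean_distances (d : ℕ) (hd : 1 ≤ d)
    (f : ℝ → ℝ)
    (hf_range : ∀ R : ℝ, 0 < R → 0 ≤ f R ∧ f R ≤ 1)
    (hf_lim : Tendsto f atTop (nhds 0)) :
    ∃ (A : Set (EuclideanSpace ℝ (Fin d))) (R : ℕ → ℝ),
      IsOpen A ∧
      StrictMono R ∧
      (∀ n, 0 < R n) ∧
      Tendsto R atTop atTop ∧
      (∀ n, ∀ x ∈ A, ∀ y ∈ A, ‖x - y‖ ≠ R n) ∧
      (∀ n, ENNReal.ofReal (f (R n)) * volume (Metric.ball (0 : EuclideanSpace ℝ (Fin d)) (R n)) ≤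
        volume (A ∩ Metric.ball (0 : EuclideanSpace ℝ (Fin d)) (R n))) := by
  classical
  have hd' : (1:ℝ) ≤ d := by exact_mod_cast hd
  have hdpos : (0:ℝ) < d := by linarith
  set ε : ℕ → ℝ := fun n => (1 / (4 * (d:ℝ)) * (1 / (6 * (d:ℝ))) ^ n) ^ d with hεdef
  have hε : ∀ n, 0 < ε n := by intro n; rw [hεdef]; positivity
  have hX : ∀ n : ℕ, ∃ X : ℝ, ∀ r ≥ X, f r ≤ ε n := by
    intro n
    have h := hf_lim.eventually (gt_mem_nhds (hε n))
    rw [eventually_atTop] at h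
    obtain ⟨X, hX⟩ := h
    exact ⟨X, fun r hr => (hX r hr).le⟩
  choose X hXs using hX
  set R0 : ℝ := max (X 0) 1 with hR0def
  have hR01 : (1:ℝ) ≤ R0 := le_max_right _ _
  have hR0 : 0 < R0 := lt_of_lt_of_le one_pos hR01
  set ρ : ℕ → ℝ := fun n =>
    Nat.rec R0 (fun m r => 6 * (d:ℝ) * (max 1 ⌈X (m+1) / (6 * (d:ℝ) * r)⌉₊ : ℕ) * r) n with hρdef
  set K : ℕ → ℕ := fun n => max 1 ⌈X (n+1) / (6 * (d:ℝ) * ρ n)⌉₊ with hKdef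
  have hK : ∀ n, 1 ≤ K n := fun n => le_max_left _ _
  have hρ : ∀ n, Rs d R0 K n = ρ n := by
    intro n
    induction n with
    | zero => rfl
    | succ n ih =>
      rw [Rs_succ hd hR0 hK, ih]
  have hRX : ∀ n, X n ≤ Rs d R0 K n := by
    intro n
    cases n with
    | zero => rw [hρ 0]; exact le_max_left _ _
    | succ n =>
      have hRn := Rpos hd hR0 hK n
      have hpos : (0:ℝ) < 6 * d * Rs d R0 K n := by positivity
      have hceil : X (n+1) / (6 * d * Rs d R0 K n) ≤ (K n : ℝ) := by
        refine le_trans (Nat.le_ceil _) ?_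
        rw [hρ n]
        have h1 : ⌈X (n + 1) / (6 * (d:ℝ) * ρ n)⌉₊ ≤ K n := by
          rw [hKdef]
          exact le_max_right _ _
        exact_mod_cast h1
      rw [Rs_succ hd hR0 hK]
      calc X (n+1) = X (n+1) / (6 * d * Rs d R0 K n) * (6 * d * Rs d R0 K n) := by
            field_simp
        _ ≤ (K n : ℝ) * (6 * d * Rs d R0 K n) :=
            mul_le_mul_of_nonneg_right hceil hpos.le
        _ = 6 * d * K n * Rs d R0 K n := by ring
  have hfR : ∀ n, f (Rs d R0 K n) ≤ ε n := fun n => hXs n _ (hRX n)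
  have hRpos := Rpos hd hR0 hK
  have hgrow : ∀ n, (2:ℝ) ^ n ≤ Rs d R0 K n := by
    intro n
    induction n with
    | zero => simpa using (show (1:ℝ) ≤ Rs d R0 K 0 from hR01)
    | succ n ih =>
      have := two_Rs_le_succ hd hR0 hK n
      rw [pow_succ]
      nlinarith [hRpos n]
  have hcont : ∀ j : Fin d, Continuous fun x : EuclideanSpace ℝ (Fin d) => x j := by
    intro j
    exact (continuous_apply j).comp (PiLp.continuous_ofLp (p := 2) (β := fun _ : Fin d => ℝ))
  have coord_le : ∀ (v : EuclideanSpace ℝ (Fin d)) (j : Fin d), |v j| ≤ ‖v‖ := by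
    intro v j
    rw [EuclideanSpace.norm_eq]
    rw [show |v j| = Real.sqrt (|v j| ^ 2) by rw [Real.sqrt_sq_eq_abs, abs_abs]]
    apply Real.sqrt_le_sqrt
    have h := Finset.single_le_sum (f := fun i => ‖v i‖ ^ 2)
      (fun i _ => by positivity) (Finset.mem_univ j)
    simpa [Real.norm_eq_abs, sq_abs] using h
  have norm_le : ∀ (v : EuclideanSpace ℝ (Fin d)) (s : ℝ), 0 ≤ s → (∀ j, |v j| ≤ s) →
      ‖v‖ ≤ s * d := by
    intro v s hs hv
    rw [EuclideanSpace.norm_eq]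
    rw [show s * (d:ℝ) = Real.sqrt ((s * d) ^ 2) by
      rw [Real.sqrt_sq (by positivity)]]
    apply Real.sqrt_le_sqrt
    have h1 : ∑ i : Fin d, ‖v i‖ ^ 2 ≤ (Finset.univ : Finset (Fin d)).card • (s ^ 2) := by
      apply Finset.sum_le_card_nsmul
      intro i _
      rw [Real.norm_eq_abs]
      exact pow_le_pow_left₀ (abs_nonneg _) (hv i) 2
    rw [Finset.card_univ, Fintype.card_fin, nsmul_eq_mul] at h1
    nlinarith [sq_nonneg s]
  refine ⟨⋃ n, {x : EuclideanSpace ℝ (Fin d) | ∀ j, x j ∈ Ss d R0 K n},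
    fun n => Rs d R0 K n, ?_, ?_, ?_, ?_, ?_, ?_⟩
  · apply isOpen_iUnion
    intro n
    have : {x : EuclideanSpace ℝ (Fin d) | ∀ j, x j ∈ Ss d R0 K n} =
        ⋂ j : Fin d, (fun x : EuclideanSpace ℝ (Fin d) => x j) ⁻¹' Ss d R0 K n := by
      ext x
      simp [Set.mem_iInter]
    rw [this]
    exact isOpen_iInter_of_finite fun j => (Ss_open hd hR0 hK n).preimage (hcont j)
  · exact strictMono_nat_of_lt_succ (Rs_lt_succ hd hR0 hK)
  · exact hRpos
  · exact tendsto_atTop_mono hgrow (tendsto_pow_atTop_atTop_of_one_lt one_lt_two)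
  · intro n x hx y hy
    rw [Set.mem_iUnion] at hx hy
    obtain ⟨a, ha⟩ := hx
    obtain ⟨b, hb⟩ := hy
    have hxE : ∀ j, ∃ m : ℤ, x j ∈ Set.Ioo (2 * Rs d R0 K n * m) (2 * Rs d R0 K n * m + ss d R0 K n) := by
      intro j
      have h := Ss_subset_Es hd hR0 hK a n (ha j)
      rwa [Es, Set.mem_iUnion] at h
    have hyE : ∀ j, ∃ m : ℤ, y j ∈ Set.Ioo (2 * Rs d R0 K n * m) (2 * Rs d R0 K n * m + ss d R0 K n) := by
      intro j
      have h := Ss_subset_Es hd hR0 hK b n (hb j)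
      rwa [Es, Set.mem_iUnion] at h
    choose mx hmx using hxE
    choose my hmy using hyE
    have hR := hRpos n
    have hs := spos hd hR0 hK n
    have hsR : ss d R0 K n ≤ Rs d R0 K n / 2 := s_le_half hd hR0 hK n
    have hsd : ss d R0 K n * d ≤ Rs d R0 K n / 2 := sd_le hd hR0 hK n
    by_cases hall : ∀ j, mx j = my j
    · have hbnd : ∀ j, |x j - y j| ≤ ss d R0 K n := by
        intro j
        have h1 := hmx j
        have h2 := hmy j
        rw [hall j] at h1
        rw [abs_le]
        constructor <;> [nlinarith [h1.1, h1.2, h2.1, h2.2]; nlinarith [h1.1, h1.2, h2.1, h2.2]]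
      have hxy : ‖x - y‖ ≤ ss d R0 K n * d := by
        refine norm_le (x - y) (ss d R0 K n) hs.le fun j => ?_
        rw [PiLp.sub_apply]
        exact hbnd j
      have : ‖x - y‖ < Rs d R0 K n := by linarith
      exact ne_of_lt this
    · push_neg at hall
      obtain ⟨j, hj⟩ := hall
      have key : Rs d R0 K n < |x j - y j| := by
        have h1 := hmx j
        have h2 := hmy j
        rcases lt_or_gt_of_ne hj with h | h
        · have hcast : (mx j : ℝ) + 1 ≤ (my j : ℝ) := by exact_mod_cast Int.add_one_le_iff.mpr h
          have : Rs d R0 K n < y j - x j := by nlinarith [h1.1, h1.2, h2.1, h2.2]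
          calc Rs d R0 K n < y j - x j := this
            _ ≤ |x j - y j| := by rw [abs_sub_comm]; exact le_abs_self _
        · have hcast : (my j : ℝ) + 1 ≤ (mx j : ℝ) := by exact_mod_cast Int.add_one_le_iff.mpr h
          have : Rs d R0 K n < x j - y j := by nlinarith [h1.1, h1.2, h2.1, h2.2]
          exact lt_of_lt_of_le this (le_abs_self _)
      have hfin : Rs d R0 K n < ‖x - y‖ := by
        refine lt_of_lt_of_le key ?_
        have := coord_le (x - y) j
        rwa [PiLp.sub_apply] at this
      exact ne_of_gt hfin
  · intro n
    have hR := hRpos n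
    have hs := spos hd hR0 hK n
    have hsd : ss d R0 K n * d ≤ Rs d R0 K n / 2 := sd_le hd hR0 hK n
    have hnonneg : 0 ≤ f (Rs d R0 K n) := (hf_range _ hR).1
    set ℓ : ℝ := ss d R0 K 0 * ∏ i ∈ Finset.range n, (K i : ℝ) with hldef
    have hℓpos : 0 < ℓ := by
      rw [hldef]
      have h0 := spos hd hR0 hK 0
      have hp : 0 < ∏ i ∈ Finset.range n, (K i : ℝ) :=
        Finset.prod_pos fun i _ => by exact_mod_cast Nat.lt_of_lt_of_le Nat.zero_lt_one (hK i)
      positivity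
    have hAn_vol : volume {x : EuclideanSpace ℝ (Fin d) | ∀ j, x j ∈ Ss d R0 K n} =
        ENNReal.ofReal ℓ ^ d := by
      have hset : {x : EuclideanSpace ℝ (Fin d) | ∀ j, x j ∈ Ss d R0 K n} =
          (MeasurableEquiv.toLp 2 (Fin d → ℝ)).symm ⁻¹'
            (Set.univ.pi fun _ : Fin d => Ss d R0 K n) := by
        ext x
        simp only [Set.mem_setOf_eq, Set.mem_preimage, Set.mem_pi, Set.mem_univ,
          forall_true_left]
        rfl
      rw [hset, (EuclideanSpace.volume_preserving_symm_measurableEquiv_toLp (Fin d)).measure_preimage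
        ((MeasurableSet.univ_pi fun _ => Ss_measurable hd hR0 hK n).nullMeasurableSet),
        volume_pi_pi, Ss_vol hd hR0 hK n, Finset.prod_const, Finset.card_univ, Fintype.card_fin]
    have hAn_ball : {x : EuclideanSpace ℝ (Fin d) | ∀ j, x j ∈ Ss d R0 K n} ⊆
        Metric.ball 0 (Rs d R0 K n) := by
      intro x hx
      rw [Metric.mem_ball, dist_zero_right]
      have hb : ‖x‖ ≤ ss d R0 K n * d := by
        refine norm_le x (ss d R0 K n) hs.le fun j => ?_
        have h1 : x j ∈ Set.Ioo 0 (ss d R0 K n) := (hx j).2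
        rw [abs_le]
        exact ⟨by linarith [h1.1], h1.2.le⟩
      linarith
    have hball : volume (Metric.ball (0 : EuclideanSpace ℝ (Fin d)) (Rs d R0 K n)) ≤
        ENNReal.ofReal (2 * Rs d R0 K n) ^ d := by
      have hsub : Metric.ball (0 : EuclideanSpace ℝ (Fin d)) (Rs d R0 K n) ⊆
          (MeasurableEquiv.toLp 2 (Fin d → ℝ)).symm ⁻¹'
            (Set.univ.pi fun _ : Fin d => Set.Ioo (-(Rs d R0 K n)) (Rs d R0 K n)) := by
        intro x hx
        rw [Metric.mem_ball, dist_zero_right] at hx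
        simp only [Set.mem_preimage, Set.mem_pi, Set.mem_univ, forall_true_left, Set.mem_Ioo]
        intro j
        have h := coord_le x j
        have h2 : |x j| < Rs d R0 K n := lt_of_le_of_lt h hx
        exact abs_lt.mp h2
      calc volume (Metric.ball (0 : EuclideanSpace ℝ (Fin d)) (Rs d R0 K n))
          ≤ volume ((MeasurableEquiv.toLp 2 (Fin d → ℝ)).symm ⁻¹'
            (Set.univ.pi fun _ : Fin d => Set.Ioo (-(Rs d R0 K n)) (Rs d R0 K n))) :=
            measure_mono hsub
        _ = ENNReal.ofReal (2 * Rs d R0 K n) ^ d := by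
            rw [(EuclideanSpace.volume_preserving_symm_measurableEquiv_toLp (Fin d)).measure_preimage
              ((MeasurableSet.univ_pi fun _ => measurableSet_Ioo).nullMeasurableSet),
              volume_pi_pi]
            rw [Real.volume_Ioo, Finset.prod_const, Finset.card_univ, Fintype.card_fin]
            congr 2
            ring
    have hreal : f (Rs d R0 K n) * (2 * Rs d R0 K n) ^ d ≤ ℓ ^ d := by
      have h1 := hfR n
      have hℓeq : ℓ = 1 / (4 * d) * (1 / (6 * d)) ^ n * (2 * Rs d R0 K n) :=
        ell_eq hd hR0 hK n
      have h2Rnn : (0:ℝ) ≤ 2 * Rs d R0 K n := by linarith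
      calc f (Rs d R0 K n) * (2 * Rs d R0 K n) ^ d
          ≤ ε n * (2 * Rs d R0 K n) ^ d :=
            mul_le_mul_of_nonneg_right h1 (pow_nonneg h2Rnn d)
        _ = ℓ ^ d := by
            simp only [hεdef]
            rw [hℓeq, ← mul_pow]
    calc ENNReal.ofReal (f (Rs d R0 K n)) *
          volume (Metric.ball (0 : EuclideanSpace ℝ (Fin d)) (Rs d R0 K n))
        ≤ ENNReal.ofReal (f (Rs d R0 K n)) * ENNReal.ofReal (2 * Rs d R0 K n) ^ d :=
          mul_le_mul_right hball _
      _ = ENNReal.ofReal (f (Rs d R0 K n) * (2 * Rs d R0 K n) ^ d) := by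
          rw [← ENNReal.ofReal_pow (by linarith), ← ENNReal.ofReal_mul hnonneg]
      _ ≤ ENNReal.ofReal (ℓ ^ d) := ENNReal.ofReal_le_ofReal hreal
      _ = ENNReal.ofReal ℓ ^ d := ENNReal.ofReal_pow hℓpos.le d
      _ = volume {x : EuclideanSpace ℝ (Fin d) | ∀ j, x j ∈ Ss d R0 K n} := hAn_vol.symm
      _ ≤ volume ((⋃ m, {x : EuclideanSpace ℝ (Fin d) | ∀ j, x j ∈ Ss d R0 K m}) ∩
            Metric.ball 0 (Rs d R0 K n)) := by
          apply measure_mono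
          intro x hx
          exact ⟨Set.mem_iUnion.mpr ⟨n, hx⟩, hAn_ball hx⟩
end

section
/- Let d ∈ ℕ (d ≥ 1) and let A = ⋃_{z ∈ ℤ^d} {y ∈ ℝ^d : ‖y − z‖_∞ < 1/8} be the integer lattice thickened by 1/8 in the ℓ^∞ norm. Then A has positive upper density with respect to Lebesgue measure (limsup_{R→∞} μ(A ∩ B_R)/μ(B_R) > 0, where B_R is the Euclidean ball of radius R about the origin), yet for all x, y ∈ A and all integers k, ‖x − y‖_∞ ≠ k + 1/2; that is, A misses every half-integer ℓ^∞ distance. -/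
open MeasureTheory Filter
open scoped ENNReal

section aux

variable {d : ℕ}

lemma aux_ciSup_lt [Nonempty (Fin d)] {f : Fin d → ℝ} {a : ℝ} :
    (⨆ i, f i) < a ↔ ∀ i, f i < a := by
  constructor
  · intro h i
    exact ((le_ciSup (Set.finite_range f).bddAbove i)).trans_lt h
  · intro h
    obtain ⟨i0, hi0⟩ := Finite.exists_max f
    exact (ciSup_le hi0).trans_lt (h i0)

lemma aux_coord_le (y : EuclideanSpace ℝ (Fin d)) (i : Fin d) : |y i| ≤ ‖y‖ := by
  rw [EuclideanSpace.norm_eq, ← Real.sqrt_sq (abs_nonneg (y i))]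
  apply Real.sqrt_le_sqrt
  have h : |y i| ^ 2 = ‖y i‖ ^ 2 := by rw [Real.norm_eq_abs]
  rw [h]
  exact Finset.single_le_sum (f := fun j => ‖y j‖ ^ 2) (fun j _ => sq_nonneg _) (Finset.mem_univ i)

lemma aux_norm_le (y : EuclideanSpace ℝ (Fin d)) {M : ℝ} (hM : 0 ≤ M)
    (h : ∀ i, |y i| ≤ M) : ‖y‖ ≤ Real.sqrt d * M := by
  rw [EuclideanSpace.norm_eq]
  calc Real.sqrt (∑ i, ‖y i‖ ^ 2) ≤ Real.sqrt (d * M ^ 2) := by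
        apply Real.sqrt_le_sqrt
        calc ∑ i, ‖y i‖ ^ 2 ≤ ∑ _i : Fin d, M ^ 2 := by
              apply Finset.sum_le_sum
              intro i _
              rw [Real.norm_eq_abs]
              exact pow_le_pow_left₀ (abs_nonneg _) (h i) 2
          _ = d * M ^ 2 := by simp [Finset.sum_const, mul_comm]
    _ = Real.sqrt d * M := by
        rw [Real.sqrt_mul (by positivity), Real.sqrt_sq hM]

lemma aux_cube_eq (c : EuclideanSpace ℝ (Fin d)) (r : ℝ) :
    {y : EuclideanSpace ℝ (Fin d) | ∀ i, |y i - c i| < r}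
      = (MeasurableEquiv.toLp 2 (Fin d → ℝ)).symm ⁻¹'
        (Set.pi Set.univ fun i => Set.Ioo (c i - r) (c i + r)) := by
  ext y
  simp only [Set.mem_setOf_eq, Set.mem_preimage, Set.mem_pi, Set.mem_univ, forall_true_left,
    Set.mem_Ioo, MeasurableEquiv.toLp_symm_apply]
  refine forall_congr' fun i => ?_
  rw [abs_sub_lt_iff]
  constructor
  · rintro ⟨h1, h2⟩; constructor <;> [skip; skip] <;> linarith
  · rintro ⟨h1, h2⟩; constructor <;> linarith

lemma aux_cube_meas (c : EuclideanSpace ℝ (Fin d)) (r : ℝ) :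
    MeasurableSet {y : EuclideanSpace ℝ (Fin d) | ∀ i, |y i - c i| < r} := by
  rw [aux_cube_eq]
  exact (MeasurableEquiv.toLp 2 (Fin d → ℝ)).symm.measurable
    (MeasurableSet.univ_pi fun i => measurableSet_Ioo)

lemma aux_cube_vol (c : EuclideanSpace ℝ (Fin d)) (r : ℝ) :
    volume {y : EuclideanSpace ℝ (Fin d) | ∀ i, |y i - c i| < r}
      = (ENNReal.ofReal (2 * r)) ^ d := by
  rw [aux_cube_eq]
  rw [(EuclideanSpace.volume_preserving_symm_measurableEquiv_toLp (Fin d)).measure_preimage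
    ((MeasurableSet.univ_pi fun i => measurableSet_Ioo).nullMeasurableSet)]
  rw [volume_pi_pi]
  have : ∀ i : Fin d, volume (Set.Ioo (c i - r) (c i + r)) = ENNReal.ofReal (2 * r) := by
    intro i
    rw [Real.volume_Ioo]
    ring_nf
  simp [this, Finset.prod_const]

end aux

/-- Let `d ≥ 1` and let `A` be the integer lattice in `ℝ^d` thickened
by `1/8` in the `ℓ^∞` norm (expressed via `⨆ i, |y i - z i|`). Then `A` has positive
upper density with respect to Lebesgue measure (with Euclidean balls `B_R`), yet
`‖x − y‖_∞ ≠ k + 1/2` for all `x, y ∈ A` and all integers `k`. -/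
theorem thickened_lattice_linfty (d : ℕ) (hd : 1 ≤ d)
    (A : Set (EuclideanSpace ℝ (Fin d)))
    (hA : A = ⋃ z ∈ {z : EuclideanSpace ℝ (Fin d) | ∀ i, ∃ m : ℤ, z i = m},
      {y : EuclideanSpace ℝ (Fin d) | (⨆ i, |y i - z i|) < 1/8}) :
    0 < Filter.limsup
        (fun R : ℝ => volume (A ∩ Metric.ball (0 : EuclideanSpace ℝ (Fin d)) R) /
          volume (Metric.ball (0 : EuclideanSpace ℝ (Fin d)) R)) Filter.atTop ∧
    ∀ x ∈ A, ∀ y ∈ A, ∀ k : ℤ, (⨆ i, |x i - y i|) ≠ (k : ℝ) + 1/2 := by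
  haveI : Nonempty (Fin d) := Fin.pos_iff_nonempty.mp hd
  constructor
  · -- density part
    set s := Real.sqrt d with hs_def
    have hs0 : 0 < s := Real.sqrt_pos.mpr (by exact_mod_cast hd)
    have hs1 : 1 ≤ s := by
      rw [hs_def, show (1:ℝ) = Real.sqrt 1 by simp]
      exact Real.sqrt_le_sqrt (by exact_mod_cast hd)
    set c : ℝ≥0∞ := ENNReal.ofReal (1 / (16 * s)) ^ d with hc_def
    have hc0 : 0 < c := ENNReal.pow_pos (ENNReal.ofReal_pos.mpr (by positivity)) d
    refine lt_of_lt_of_le hc0 (le_limsup_of_frequently_le' ?_)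
    apply Filter.Eventually.frequently
    filter_upwards [Filter.eventually_ge_atTop (4 * s)] with R hR
    have hR0 : 0 < R := lt_of_lt_of_le (by positivity) hR
    set N : ℕ := ⌊R / (2 * s)⌋₊ with hN_def
    have hNle : (N : ℝ) ≤ R / (2 * s) := Nat.floor_le (by positivity)
    have hNlt : R / (2 * s) < N + 1 := Nat.lt_floor_add_one _
    have hRlt : R < 2 * s * (N + 1) := by
      rw [div_lt_iff₀ (by positivity)] at hNlt
      linarith
    set S : Finset (Fin d → ℤ) := Fintype.piFinset fun _ => Finset.Icc (-(N:ℤ)) (N:ℤ) with hS_def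
    have hcard : S.card = (2 * N + 1) ^ d := by
      rw [hS_def, Fintype.card_piFinset]
      have : (Finset.Icc (-(N:ℤ)) (N:ℤ)).card = 2 * N + 1 := by
        rw [Int.card_Icc]
        omega
      simp [this, Finset.prod_const]
    set cube : (Fin d → ℤ) → Set (EuclideanSpace ℝ (Fin d)) :=
      fun z => {y | ∀ i, |y i - (z i : ℝ)| < 1/8} with hcube_def
    have hcubeA : ∀ z, cube z ⊆ A := by
      intro z y hy
      rw [hA]
      have hmem : (WithLp.toLp 2 (fun i => (z i : ℝ)) : EuclideanSpace ℝ (Fin d))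
          ∈ {z : EuclideanSpace ℝ (Fin d) | ∀ i, ∃ m : ℤ, z i = m} := fun i => ⟨z i, rfl⟩
      exact Set.mem_biUnion hmem (aux_ciSup_lt.mpr hy)
    have hcubeB : ∀ z ∈ S, cube z ⊆ Metric.ball (0 : EuclideanSpace ℝ (Fin d)) R := by
      intro z hz y hy
      rw [mem_ball_zero_iff]
      have hcoord : ∀ i, |y i| ≤ (N : ℝ) + 1 := by
        intro i
        have h1 : |y i - (z i : ℝ)| < 1/8 := hy i
        have h2 : |(z i : ℝ)| ≤ N := by
          rw [hS_def, Fintype.mem_piFinset] at hz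
          have := hz i
          rw [Finset.mem_Icc] at this
          rw [abs_le]
          exact_mod_cast this
        calc |y i| = |(y i - (z i : ℝ)) + (z i : ℝ)| := by ring_nf
          _ ≤ |y i - (z i : ℝ)| + |(z i : ℝ)| := abs_add_le _ _
          _ ≤ (N : ℝ) + 1 := by linarith
      have hnle := aux_norm_le y (by positivity) hcoord
      rw [← hs_def] at hnle
      have h2N : (N : ℝ) * (2 * s) ≤ R := (le_div_iff₀ (by positivity)).mp hNle
      calc ‖y‖ ≤ s * ((N : ℝ) + 1) := hnle
        _ < R := by nlinarith [Nat.cast_nonneg (α := ℝ) N]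
    have hdisj : (S : Set (Fin d → ℤ)).PairwiseDisjoint cube := by
      intro z _ w _ hzw
      rw [Function.onFun, Set.disjoint_left]
      intro y hy1 hy2
      apply hzw
      funext i
      have h1 : |y i - (z i : ℝ)| < 1/8 := hy1 i
      have h2 : |y i - (w i : ℝ)| < 1/8 := hy2 i
      have h3 : |((z i - w i : ℤ) : ℝ)| < 1 := by
        push_cast
        calc |(z i : ℝ) - w i| = |-(y i - (z i : ℝ)) + (y i - (w i : ℝ))| := by ring_nf
          _ ≤ |-(y i - (z i : ℝ))| + |y i - (w i : ℝ)| := abs_add_le _ _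
          _ < 1 := by rw [abs_neg]; linarith
      have h4 : |z i - w i| < 1 := by exact_mod_cast h3
      rw [abs_lt] at h4
      omega
    have hmeas : ∀ z ∈ S, MeasurableSet (cube z) := fun z _ => aux_cube_meas (WithLp.toLp 2 (fun i => (z i : ℝ))) _
    have hunion : volume (⋃ z ∈ S, cube z) = (S.card : ℝ≥0∞) * ENNReal.ofReal (1/4) ^ d := by
      rw [measure_biUnion_finset hdisj hmeas]
      have : ∀ z ∈ S, volume (cube z) = ENNReal.ofReal (1/4) ^ d := by
        intro z _
        rw [hcube_def]
        have := aux_cube_vol (WithLp.toLp 2 (fun i => (z i : ℝ)) : EuclideanSpace ℝ (Fin d)) (1/8)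
        norm_num at this ⊢
        exact this
      rw [Finset.sum_congr rfl this, Finset.sum_const, nsmul_eq_mul]
    have hlow : (S.card : ℝ≥0∞) * ENNReal.ofReal (1/4) ^ d
        ≤ volume (A ∩ Metric.ball (0 : EuclideanSpace ℝ (Fin d)) R) := by
      rw [← hunion]
      apply measure_mono
      apply Set.iUnion₂_subset
      intro z hz
      exact Set.subset_inter (hcubeA z) (hcubeB z hz)
    have hupp : volume (Metric.ball (0 : EuclideanSpace ℝ (Fin d)) R)
        ≤ ENNReal.ofReal (2 * R) ^ d := by
      rw [← aux_cube_vol (0 : EuclideanSpace ℝ (Fin d)) R]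
      apply measure_mono
      intro y hy i
      rw [mem_ball_zero_iff] at hy
      have : (0 : EuclideanSpace ℝ (Fin d)) i = 0 := rfl
      rw [this, sub_zero]
      exact lt_of_le_of_lt (aux_coord_le y i) hy
    have hB0 : volume (Metric.ball (0 : EuclideanSpace ℝ (Fin d)) R) ≠ 0 :=
      (Metric.measure_ball_pos volume 0 hR0).ne'
    have hBtop : volume (Metric.ball (0 : EuclideanSpace ℝ (Fin d)) R) ≠ ⊤ :=
      measure_ball_lt_top.ne
    rw [ENNReal.le_div_iff_mul_le (Or.inl hB0) (Or.inl hBtop)]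
    have hkey : (1 / (16 * s)) * (2 * R) ≤ (2 * (N:ℝ) + 1) / 4 := by
      rw [one_div_mul_eq_div, div_le_div_iff₀ (by positivity) (by norm_num)]
      have hN0 : (0:ℝ) ≤ N := Nat.cast_nonneg N
      nlinarith
    calc c * volume (Metric.ball (0 : EuclideanSpace ℝ (Fin d)) R)
        ≤ c * ENNReal.ofReal (2 * R) ^ d := mul_le_mul_right hupp c
      _ = ENNReal.ofReal ((1 / (16 * s)) * (2 * R)) ^ d := by
          rw [hc_def, ← mul_pow, ← ENNReal.ofReal_mul (by positivity)]
      _ ≤ ENNReal.ofReal ((2 * (N:ℝ) + 1) / 4) ^ d :=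
          pow_le_pow_left₀ (zero_le (a := ENNReal.ofReal _)) (ENNReal.ofReal_le_ofReal hkey) d
      _ = (S.card : ℝ≥0∞) * ENNReal.ofReal (1/4) ^ d := by
          rw [hcard]
          rw [show (2 * (N:ℝ) + 1) / 4 = (2 * (N:ℝ) + 1) * (1/4) by ring]
          rw [ENNReal.ofReal_mul (by positivity), mul_pow]
          congr 1
          rw [show (2 * (N:ℝ) + 1) = ((2 * N + 1 : ℕ) : ℝ) by push_cast; ring]
          rw [ENNReal.ofReal_natCast]
          push_cast
          ring
      _ ≤ volume (A ∩ Metric.ball (0 : EuclideanSpace ℝ (Fin d)) R) := hlow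
  · -- distance part
    intro x hx y hy k
    rw [hA] at hx hy
    simp only [Set.mem_iUnion, Set.mem_setOf_eq, exists_prop] at hx hy
    obtain ⟨z, hz, hxz⟩ := hx
    obtain ⟨w, hw, hyw⟩ := hy
    rw [aux_ciSup_lt] at hxz hyw
    intro hsup
    have key : ∀ i, |x i - y i| ≤ (k:ℝ) + 1/4 ∨ (k:ℝ) + 3/4 ≤ |x i - y i| := by
      intro i
      obtain ⟨m, hm⟩ := hz i
      obtain ⟨n, hn⟩ := hw i
      have a1 : |x i - (m:ℝ)| < 1/8 := by rw [← hm]; exact hxz i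
      have a2 : |y i - (n:ℝ)| < 1/8 := by rw [← hn]; exact hyw i
      have h1 : |(x i - y i) - ((m:ℝ) - n)| < 1/4 := by
        rw [abs_lt] at a1 a2 ⊢
        constructor <;> linarith
      have h2 : |(|x i - y i| - |((m - n : ℤ):ℝ)|)| < 1/4 := by
        have := abs_abs_sub_abs_le_abs_sub (x i - y i) ((m:ℝ) - n)
        push_cast at this ⊢
        linarith
      set j : ℤ := |m - n| with hj_def
      have hj0 : 0 ≤ j := abs_nonneg _
      have hjr : |((m - n : ℤ):ℝ)| = (j:ℝ) := by
        rw [hj_def]; push_cast [Int.cast_abs]; ring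
      rw [hjr, abs_lt] at h2
      by_cases hjk : j ≤ k
      · left
        have : (j:ℝ) ≤ k := by exact_mod_cast hjk
        linarith
      · right
        have : (k:ℝ) + 1 ≤ j := by exact_mod_cast (by omega : k + 1 ≤ j)
        linarith
    by_cases hone : ∃ i, (k:ℝ) + 3/4 ≤ |x i - y i|
    · obtain ⟨i, hi⟩ := hone
      have hle : |x i - y i| ≤ ⨆ j, |x j - y j| :=
        le_ciSup (f := fun j => |x j - y j|) (Set.finite_range _).bddAbove i
      rw [hsup] at hle
      linarith
    · push_neg at hone
      have hall : ∀ i, |x i - y i| ≤ (k:ℝ) + 1/4 := by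
        intro i
        rcases key i with h | h
        · exact h
        · exact absurd h (not_le.mpr (hone i))
      have := ciSup_le hall
      rw [hsup] at this
      linarith
end

section
/- Let d ∈ ℕ (d ≥ 1) and let A = ⋃_{z ∈ ℤ^d} {y ∈ ℝ^d : ‖y − z‖_1 < 1/8} be the integer lattice thickened by 1/8 in the ℓ^1 norm. Then A has positive upper density with respect to Lebesgue measure (limsup_{R→∞} μ(A ∩ B_R)/μ(B_R) > 0, where B_R is the Euclidean ball of radius R about the origin), yet for all x, y ∈ A and all integers k, ‖x − y‖_1 ≠ k + 1/2; that is, A misses every half-integer ℓ^1 distance. -/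
open MeasureTheory Filter Set Metric ENNReal

/-- Let `d ≥ 1` and let `A` be the integer lattice in `ℝ^d` thickened
by `1/8` in the `ℓ^1` norm (expressed via `∑ i, |y i - z i|`). Then `A` has positive
upper density with respect to Lebesgue measure (with Euclidean balls `B_R`), yet
`‖x − y‖_1 ≠ k + 1/2` for all `x, y ∈ A` and all integers `k`. -/
theorem thickened_lattice_l1 (d : ℕ) (hd : 1 ≤ d)
    (A : Set (EuclideanSpace ℝ (Fin d)))
    (hA : A = ⋃ z ∈ {z : EuclideanSpace ℝ (Fin d) | ∀ i, ∃ m : ℤ, z i = m},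
      {y : EuclideanSpace ℝ (Fin d) | (∑ i, |y i - z i|) < 1/8}) :
    0 < Filter.limsup
        (fun R : ℝ => volume (A ∩ Metric.ball (0 : EuclideanSpace ℝ (Fin d)) R) /
          volume (Metric.ball (0 : EuclideanSpace ℝ (Fin d)) R)) Filter.atTop ∧
    ∀ x ∈ A, ∀ y ∈ A, ∀ k : ℤ, (∑ i, |x i - y i|) ≠ (k : ℝ) + 1/2 := by
  constructor
  · have hd0 : (0:ℝ) < d := by exact_mod_cast hd
    have hd1 : (1:ℝ) ≤ d := by exact_mod_cast hd
    set ε : ℝ := 1/(16*d) with hε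
    have hεpos : 0 < ε := by positivity
    have hε1 : ε ≤ 1 := by
      rw [hε, div_le_one (by positivity)]
      linarith
    set sd : ℝ := Real.sqrt d with hsd
    have hsd1 : 1 ≤ sd := by
      rw [hsd]
      rw [show (1:ℝ) = Real.sqrt 1 by simp]
      exact Real.sqrt_le_sqrt (by exact_mod_cast hd)
    have hsdsq : sd ^ 2 = d := Real.sq_sqrt (le_of_lt hd0)
    set c : ℝ≥0∞ := ENNReal.ofReal ((ε/(4*sd))^d) with hc
    have hcpos : 0 < c := ENNReal.ofReal_pos.2 (by positivity)
    refine lt_of_lt_of_le hcpos (le_limsup_of_frequently_le' ?_)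
    refine ((eventually_ge_atTop (2*sd)).mono (fun R hR => ?_)).frequently
    -- setup
    have hRpos : (0:ℝ) < R := lt_of_lt_of_le (by linarith) hR
    set n : ℕ := ⌊R / sd⌋₊ with hn
    have hsdpos : (0:ℝ) < sd := by linarith
    have hn2 : (n:ℝ) * sd ≤ R := by
      have := Nat.floor_le (le_of_lt (div_pos hRpos hsdpos))
      rw [← hn] at this
      calc (n:ℝ) * sd ≤ (R / sd) * sd := by nlinarith
        _ = R := by field_simp
    have hn1 : R / (2*sd) ≤ (n:ℝ) := by
      have h1 : R / sd - 1 ≤ (n:ℝ) := by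
        have := Nat.lt_floor_add_one (R / sd)
        rw [← hn] at this
        linarith
      have h2 : 1 ≤ R / (2*sd) := by
        rw [le_div_iff₀ (by positivity)]; linarith
      have : R / sd = 2 * (R / (2*sd)) := by field_simp
      linarith
    -- the small-cubes set
    set t : Set ℝ := ⋃ m ∈ Finset.range n, Ico (m:ℝ) (m+ε) with ht
    set D : Set (EuclideanSpace ℝ (Fin d)) :=
      (MeasurableEquiv.toLp 2 (Fin d → ℝ)).symm ⁻¹' (Set.univ.pi fun _ : Fin d => t) with hD
    have hmemD : ∀ y : EuclideanSpace ℝ (Fin d), y ∈ D ↔ ∀ i, y i ∈ t := by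
      intro y
      simp [hD, Set.mem_univ_pi]
    have hDA : D ⊆ A := by
      intro y hy
      rw [hmemD] at hy
      have hy' : ∀ i, ∃ m : ℕ, m < n ∧ (m:ℝ) ≤ y i ∧ y i < m + ε := by
        intro i
        have := hy i
        rw [ht] at this
        simp only [Set.mem_iUnion, Finset.mem_range, Set.mem_Ico, exists_prop] at this
        obtain ⟨m, hm, h1, h2⟩ := this
        exact ⟨m, hm, h1, h2⟩
      choose m hmn hml hmr using hy'
      rw [hA]
      refine Set.mem_iUnion₂.2 ⟨(WithLp.toLp 2 (fun i => (m i : ℝ)) : EuclideanSpace ℝ (Fin d)), ?_, ?_⟩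
      · intro i; exact ⟨(m i : ℤ), by push_cast; rfl⟩
      · show (∑ i, |y i - (m i : ℝ)|) < 1/8
        have hne : (Finset.univ : Finset (Fin d)).Nonempty := by
          have : Nonempty (Fin d) := ⟨⟨0, hd⟩⟩
          exact Finset.univ_nonempty
        calc ∑ i, |y i - (m i : ℝ)| < ∑ _i : Fin d, ε := by
              apply Finset.sum_lt_sum_of_nonempty hne
              intro i _
              rw [abs_of_nonneg (by linarith [hml i])]
              linarith [hmr i]
          _ = d * ε := by rw [Finset.sum_const]; simp [mul_comm]
          _ = 1/16 := by rw [hε]; field_simp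
          _ < 1/8 := by norm_num
    have hDB : D ⊆ Metric.ball (0 : EuclideanSpace ℝ (Fin d)) R := by
      intro y hy
      rw [hmemD] at hy
      have hbound : ∀ i, 0 ≤ y i ∧ y i < n := by
        intro i
        have := hy i
        rw [ht] at this
        simp only [Set.mem_iUnion, Finset.mem_range, Set.mem_Ico, exists_prop] at this
        obtain ⟨mm, hm, h1, h2⟩ := this
        constructor
        · have : (0:ℝ) ≤ mm := Nat.cast_nonneg _
          linarith
        · have : (mm:ℝ) + 1 ≤ n := by exact_mod_cast hm
          linarith
      rw [mem_ball_zero_iff, EuclideanSpace.norm_eq]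
      have hnn : 1 ≤ n := by
        by_contra h
        push_neg at h
        interval_cases n
        · have := hbound ⟨0, hd⟩
          simp at this
          linarith [this.1, this.2]
      have hsum : ∑ i, ‖y i‖^2 < d * (n:ℝ)^2 := by
        have hne : (Finset.univ : Finset (Fin d)).Nonempty := by
          have : Nonempty (Fin d) := ⟨⟨0, hd⟩⟩
          exact Finset.univ_nonempty
        calc ∑ i, ‖y i‖^2 < ∑ _i : Fin d, (n:ℝ)^2 := by
              apply Finset.sum_lt_sum_of_nonempty hne
              intro i _
              rw [Real.norm_eq_abs, sq_abs]
              have := hbound i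
              nlinarith [this.1, this.2]
          _ = d * (n:ℝ)^2 := by rw [Finset.sum_const]; simp [mul_comm]
      calc Real.sqrt (∑ i, ‖y i‖^2) < Real.sqrt (d * (n:ℝ)^2) := by
            apply Real.sqrt_lt_sqrt (by positivity) hsum
        _ = sd * n := by
            rw [Real.sqrt_mul (le_of_lt hd0), Real.sqrt_sq (Nat.cast_nonneg n), hsd]
        _ ≤ R := by rw [mul_comm]; exact hn2
    -- measure of D
    have htmeas : MeasurableSet t := by
      rw [ht]
      exact MeasurableSet.biUnion (Finset.range n).countable_toSet
        (fun m _ => measurableSet_Ico)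
    have hvolt : volume t = (n : ℝ≥0∞) * ENNReal.ofReal ε := by
      rw [ht]
      rw [measure_biUnion_finset ?_ (fun m _ => measurableSet_Ico)]
      · simp [Real.volume_Ico]
      · intro m1 h1 m2 h2 hne
        simp only [Function.onFun]
        rw [Set.disjoint_left]
        intro a ha1 ha2
        simp only [Set.mem_Ico] at ha1 ha2
        have c1 : (m1:ℝ) < m2 + 1 := by linarith [ha1.1, ha2.2]
        have c2 : (m2:ℝ) < m1 + 1 := by linarith [ha2.1, ha1.2]
        have : m1 < m2 + 1 := by exact_mod_cast c1
        have : m2 < m1 + 1 := by exact_mod_cast c2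
        omega
    have hvolD : volume D = ENNReal.ofReal ((n * ε)^d) := by
      rw [hD, MeasurePreserving.measure_preimage_equiv
        (EuclideanSpace.volume_preserving_symm_measurableEquiv_toLp (Fin d)),
        volume_pi_pi]
      rw [Finset.prod_congr rfl (fun i _ => hvolt), Finset.prod_const]
      simp only [Finset.card_univ, Fintype.card_fin]
      rw [← ENNReal.ofReal_natCast, ← ENNReal.ofReal_mul (Nat.cast_nonneg n),
        ← ENNReal.ofReal_pow (by positivity)]
    -- ball volume upper bound
    have hballub : volume (Metric.ball (0 : EuclideanSpace ℝ (Fin d)) R)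
        ≤ ENNReal.ofReal ((2*R)^d) := by
      have hsub : Metric.ball (0 : EuclideanSpace ℝ (Fin d)) R ⊆
          (MeasurableEquiv.toLp 2 (Fin d → ℝ)).symm ⁻¹'
            (Set.univ.pi fun _ : Fin d => Set.Ioo (-R) R) := by
        intro x hx
        rw [mem_ball_zero_iff, EuclideanSpace.norm_eq] at hx
        simp only [Set.mem_preimage, Set.mem_univ_pi]
        intro i
        have h1 : |x i| ≤ Real.sqrt (∑ j, ‖x j‖^2) := by
          rw [← Real.sqrt_sq (abs_nonneg (x i))]
          apply Real.sqrt_le_sqrt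
          have := Finset.single_le_sum (f := fun j => ‖x j‖^2)
            (fun j _ => sq_nonneg _) (Finset.mem_univ i)
          simpa [Real.norm_eq_abs, sq_abs] using this
        have : |x i| < R := lt_of_le_of_lt h1 hx
        rw [abs_lt] at this
        exact ⟨this.1, this.2⟩
      calc volume (Metric.ball (0 : EuclideanSpace ℝ (Fin d)) R)
          ≤ volume ((MeasurableEquiv.toLp 2 (Fin d → ℝ)).symm ⁻¹'
            (Set.univ.pi fun _ : Fin d => Set.Ioo (-R) R)) := measure_mono hsub
        _ = ENNReal.ofReal ((2*R)^d) := by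
            rw [MeasurePreserving.measure_preimage_equiv
              (EuclideanSpace.volume_preserving_symm_measurableEquiv_toLp (Fin d)), volume_pi_pi]
            simp only [Real.volume_Ioo]
            rw [Finset.prod_const]
            simp only [Finset.card_univ, Fintype.card_fin]
            rw [← ENNReal.ofReal_pow (by linarith : (0:ℝ) ≤ R - -R)]
            congr 1
            ring_nf
    -- conclude
    have hball0 : volume (Metric.ball (0 : EuclideanSpace ℝ (Fin d)) R) ≠ 0 :=
      (measure_ball_pos volume 0 hRpos).ne'
    have hballtop : volume (Metric.ball (0 : EuclideanSpace ℝ (Fin d)) R) ≠ ⊤ :=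
      measure_ball_lt_top.ne
    rw [ENNReal.le_div_iff_mul_le (Or.inl hball0) (Or.inl hballtop)]
    calc c * volume (Metric.ball (0 : EuclideanSpace ℝ (Fin d)) R)
        ≤ c * ENNReal.ofReal ((2*R)^d) := mul_le_mul_right hballub _
      _ = ENNReal.ofReal ((ε/(4*sd))^d * (2*R)^d) := by
          rw [hc, ← ENNReal.ofReal_mul (by positivity)]
      _ ≤ ENNReal.ofReal ((n * ε)^d) := by
          apply ENNReal.ofReal_le_ofReal
          rw [← mul_pow]
          apply pow_le_pow_left₀ (by positivity)
          calc ε/(4*sd) * (2*R) = ε * (R / (2*sd)) := by field_simp; ring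
            _ ≤ ε * n := by nlinarith [hn1]
            _ = n * ε := mul_comm _ _
      _ = volume D := hvolD.symm
      _ ≤ volume (A ∩ Metric.ball (0 : EuclideanSpace ℝ (Fin d)) R) :=
          measure_mono (Set.subset_inter hDA hDB)
  · subst hA
    intro x hx y hy k hk
    simp only [Set.mem_iUnion, Set.mem_setOf_eq] at hx hy
    obtain ⟨z, hz, hxz⟩ := hx
    obtain ⟨w, hw, hyw⟩ := hy
    choose mz hmz using hz
    choose mw hmw using hw
    set N : ℤ := ∑ i, |mz i - mw i| with hN
    have hNr : (N : ℝ) = ∑ i, |z i - w i| := by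
      push_cast [hN]
      exact Finset.sum_congr rfl fun i _ => by rw [hmz i, hmw i]
    have h1 : ∑ i, |x i - y i| ≤ ∑ i, (|x i - z i| + |z i - w i| + |y i - w i|) :=
      Finset.sum_le_sum fun i _ => by
        calc |x i - y i| ≤ |x i - w i| + |w i - y i| := abs_sub_le _ _ _
          _ ≤ |x i - z i| + |z i - w i| + |y i - w i| := by
              have := abs_sub_le (x i) (z i) (w i)
              rw [abs_sub_comm (w i) (y i)]; linarith
    have h2 : ∑ i, |z i - w i| ≤ ∑ i, (|x i - z i| + |x i - y i| + |y i - w i|) :=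
      Finset.sum_le_sum fun i _ => by
        calc |z i - w i| ≤ |z i - y i| + |y i - w i| := abs_sub_le _ _ _
          _ ≤ |x i - z i| + |x i - y i| + |y i - w i| := by
              have := abs_sub_le (z i) (x i) (y i)
              rw [abs_sub_comm (z i) (x i)] at this
              linarith
    rw [Finset.sum_add_distrib, Finset.sum_add_distrib] at h1 h2
    have habs : |((k : ℝ) + 1/2) - N| ≤ 1/4 := by
      rw [abs_le]
      constructor <;> rw [hNr] <;> linarith [hk ▸ h1, hk ▸ h2]
    have hj : ∀ j : ℤ, (1:ℝ)/2 ≤ |(j : ℝ) + 1/2| := by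
      intro j
      rcases le_or_gt 0 j with h | h
      · rw [abs_of_nonneg (by positivity)]
        have : (0:ℝ) ≤ j := by exact_mod_cast h
        linarith
      · have hj1 : j ≤ -1 := by omega
        have : (j:ℝ) ≤ -1 := by exact_mod_cast hj1
        rw [abs_of_nonpos (by linarith)]; linarith
    have := hj (k - N)
    rw [Int.cast_sub] at this
    have : |((k : ℝ) + 1/2) - N| = |((k:ℝ) - N) + 1/2| := by ring_nf
    rw [this] at habs
    have := hj (k - N)
    rw [Int.cast_sub] at this
    linarith
end
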